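/- Let 1 < p < ∞ and let u(x) = sin_{2,p'}(x) be the generalized sine function with parameters (2, p'). Then u''(x) = -(p'/2)·|u(x)|^{p'-2}·u(x) for all x in (0, π_{2,p'}). -/

import Mathlib

open Set Filter MeasureTheory intervalIntegral
open scoped Topology

/-- for u = sin_{2,p'} (characterized as the inverse of
y ↦ ∫₀^y (1-t^{p'})^{-1/2} dt on [0, π_{2,p'}/2], even about π_{2,p'}/2),
one has u''(x) = -(p'/2)·|u(x)|^{p'-2}·u(x) on (0, π_{2,p'}), where p' = p/(p-1). -/
theorem stmt11 (p : ℝ) (hp : 1 < p) (sn : ℝ → ℝ) (π₀ : ℝ)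
    (hπ : π₀ = 2 * ∫ t in (0:ℝ)..1, (1 - t ^ (p / (p - 1))) ^ (-(1/2 : ℝ)))
    (hinv : ∀ y ∈ Set.Icc (0:ℝ) 1,
      sn (∫ t in (0:ℝ)..y, (1 - t ^ (p / (p - 1))) ^ (-(1/2 : ℝ))) = y)
    (hsym : ∀ x, sn (π₀ - x) = sn x) :
    ∀ x ∈ Set.Ioo (0:ℝ) π₀,
      deriv (deriv sn) x =
        -(p / (p - 1) / 2) * (|sn x| ^ (p / (p - 1) - 2) * sn x) := by
  have hp1 : (0:ℝ) < p - 1 := by linarith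
  obtain ⟨q, hqdef⟩ : ∃ q : ℝ, q = p / (p - 1) := ⟨_, rfl⟩
  rw [← hqdef] at hπ hinv ⊢
  have hq : 1 < q := by rw [hqdef, lt_div_iff₀ hp1]; linarith
  have hq0 : (0:ℝ) < q := by linarith
  obtain ⟨f, hfdef⟩ : ∃ f : ℝ → ℝ, f = fun t : ℝ => (1 - t ^ q) ^ (-(1/2 : ℝ)) := ⟨_, rfl⟩
  obtain ⟨F, hFdef⟩ : ∃ F : ℝ → ℝ, F = fun y : ℝ => ∫ t in (0:ℝ)..y, f t := ⟨_, rfl⟩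
  have hπF : π₀ = 2 * F 1 := by rw [hFdef, hfdef]; exact hπ
  have hsnF : ∀ y ∈ Set.Icc (0:ℝ) 1, sn (F y) = y := by
    intro y hy
    have := hinv y hy
    rw [hFdef, hfdef]
    exact this
  -- basic facts about f
  have hf_eval : ∀ t, f t = (1 - t ^ q) ^ (-(1/2 : ℝ)) := fun t => by rw [hfdef]
  have hfm : Measurable f := by
    rw [hfdef]
    exact (measurable_const.sub (measurable_id.pow measurable_const)).pow measurable_const
  have hf_nonneg : ∀ t ∈ Set.Icc (0:ℝ) 1, 0 ≤ f t := by
    intro t ht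
    rw [hf_eval]
    have h1 : t ^ q ≤ 1 := Real.rpow_le_one ht.1 ht.2 hq0.le
    exact Real.rpow_nonneg (by linarith) _
  have hf_pos : ∀ t ∈ Set.Ico (0:ℝ) 1, 0 < f t := by
    intro t ht
    rw [hf_eval]
    have h1 : t ^ q < 1 := Real.rpow_lt_one ht.1 ht.2 hq0
    exact Real.rpow_pos_of_pos (by linarith) _
  have hf_cont : ∀ t ∈ Set.Ico (0:ℝ) 1, ContinuousAt f t := by
    intro t ht
    have h1 : t ^ q < 1 := Real.rpow_lt_one ht.1 ht.2 hq0
    have hinner : ContinuousAt (fun s : ℝ => 1 - s ^ q) t :=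
      continuousAt_const.sub (continuousAt_id.rpow_const (Or.inr hq0.le))
    rw [hfdef]
    exact hinner.rpow_const (Or.inl ((by linarith : (0:ℝ) < 1 - t ^ q).ne'))
  -- integrability of f on [0,1]
  have hmaj : IntervalIntegrable (fun t : ℝ => (1 - t) ^ (-(1/2 : ℝ))) volume 0 1 := by
    have h1 : IntervalIntegrable (fun s : ℝ => s ^ (-(1/2 : ℝ))) volume 0 1 :=
      intervalIntegral.intervalIntegrable_rpow' (by norm_num)
    have h2 := (h1.comp_sub_left 1).symm
    norm_num at h2
    exact h2
  have hfint : IntervalIntegrable f volume 0 1 := by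
    apply hmaj.mono_fun hfm.aestronglyMeasurable.restrict
    filter_upwards [ae_restrict_mem measurableSet_uIoc] with t ht
    rw [Set.uIoc_of_le (by norm_num : (0:ℝ) ≤ 1)] at ht
    have hnn1 : 0 ≤ f t := hf_nonneg t ⟨ht.1.le, ht.2⟩
    have hnn2 : (0:ℝ) ≤ (1 - t) ^ (-(1/2 : ℝ)) := Real.rpow_nonneg (by linarith [ht.2]) _
    rw [Real.norm_eq_abs, Real.norm_eq_abs, abs_of_nonneg hnn1, abs_of_nonneg hnn2]
    rcases eq_or_lt_of_le ht.2 with h1 | h1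
    · rw [hf_eval, h1]
      simp [Real.one_rpow, Real.zero_rpow (by norm_num : -(1/2 : ℝ) ≠ 0)]
    · rw [hf_eval]
      have h2 : t ^ q ≤ t := by
        have := Real.rpow_le_rpow_of_exponent_ge ht.1 h1.le hq.le
        rwa [Real.rpow_one] at this
      exact Real.rpow_le_rpow_of_nonpos (by linarith) (by linarith) (by norm_num)
  -- continuity and monotonicity of F
  have hFcont : ContinuousOn F (Set.Icc 0 1) := by
    rw [hFdef]
    have hI : IntegrableOn f (Set.uIcc (0:ℝ) 1) volume := by
      rw [Set.uIcc_of_le (by norm_num : (0:ℝ) ≤ 1), integrableOn_Icc_iff_integrableOn_Ioc]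
      have := hfint.def'
      rwa [Set.uIoc_of_le (by norm_num : (0:ℝ) ≤ 1)] at this
    have h := intervalIntegral.continuousOn_primitive_interval hI
    rwa [Set.uIcc_of_le (by norm_num : (0:ℝ) ≤ 1)] at h
  have hFsub : ∀ a b, a ∈ Set.Icc (0:ℝ) 1 → b ∈ Set.Icc (0:ℝ) 1 →
      IntervalIntegrable f volume a b := by
    intro a b ha hb
    apply hfint.mono_set
    apply Set.uIcc_subset_uIcc <;> rw [Set.uIcc_of_le (by norm_num : (0:ℝ) ≤ 1)] <;> assumption
  have hFadd : ∀ a b, a ∈ Set.Icc (0:ℝ) 1 → b ∈ Set.Icc (0:ℝ) 1 →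
      F b - F a = ∫ t in a..b, f t := by
    intro a b ha hb
    rw [hFdef]
    exact intervalIntegral.integral_interval_sub_left
      (hFsub 0 b ⟨le_refl 0, zero_le_one⟩ hb) (hFsub 0 a ⟨le_refl 0, zero_le_one⟩ ha)
  have hFmono : StrictMonoOn F (Set.Icc 0 1) := by
    intro a ha b hb hab
    have hpos : 0 < ∫ t in a..b, f t := by
      apply intervalIntegral.intervalIntegral_pos_of_pos_on (hFsub a b ha hb)
      · intro t ht
        exact hf_pos t ⟨le_of_lt (lt_of_le_of_lt ha.1 ht.1), lt_of_lt_of_le ht.2 hb.2⟩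
      · exact hab
    have := hFadd a b ha hb
    linarith
  have hF0 : F 0 = 0 := by rw [hFdef]; exact intervalIntegral.integral_same
  have hF1pos : 0 < F 1 := by
    have h := hFadd 0 1 ⟨le_refl 0, zero_le_one⟩ ⟨zero_le_one, le_refl 1⟩
    have hpos : 0 < ∫ t in (0:ℝ)..1, f t := by
      apply intervalIntegral.intervalIntegral_pos_of_pos_on
        (hFsub 0 1 ⟨le_refl 0, zero_le_one⟩ ⟨zero_le_one, le_refl 1⟩)
      · intro t ht; exact hf_pos t ⟨ht.1.le, ht.2⟩
      · norm_num
    linarith [hF0]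
  obtain ⟨c, hcdef⟩ : ∃ c : ℝ, c = π₀ / 2 := ⟨_, rfl⟩
  have hF1 : F 1 = c := by rw [hcdef, hπF]; ring
  have hc0 : 0 < c := hF1 ▸ hF1pos
  have hπpos : 0 < π₀ := by rw [hcdef] at hc0; linarith
  have hcπ : c < π₀ := by rw [hcdef]; linarith
  have hπc : π₀ - c = c := by rw [hcdef]; ring
  have hsnc : sn c = 1 := by rw [← hF1]; exact hsnF 1 ⟨zero_le_one, le_refl 1⟩
  have hFnn : ∀ a ∈ Set.Icc (0:ℝ) 1, 0 ≤ F a := by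
    intro a ha
    rcases eq_or_lt_of_le ha.1 with h | h
    · rw [← h, hF0]
    · have := hFmono ⟨le_refl 0, zero_le_one⟩ ha h
      rw [hF0] at this
      exact this.le
  -- key surjectivity fact
  have hK : ∀ x ∈ Set.Ioo (0:ℝ) c, sn x ∈ Set.Ioo (0:ℝ) 1 ∧ F (sn x) = x := by
    intro x hx
    have hsurj := intermediate_value_Icc zero_le_one hFcont
    have hxmem : x ∈ Set.Icc (F 0) (F 1) := by rw [hF0, hF1]; exact ⟨hx.1.le, hx.2.le⟩
    obtain ⟨y, hy, hFy⟩ := hsurj hxmem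
    have hsnx : sn x = y := by rw [← hFy]; exact hsnF y hy
    have hy0 : y ≠ 0 := by rintro rfl; rw [hF0] at hFy; exact hx.1.ne' hFy.symm
    have hy1 : y ≠ 1 := by rintro rfl; rw [hF1] at hFy; exact hx.2.ne hFy.symm
    refine ⟨?_, ?_⟩
    · rw [hsnx]; exact ⟨hy.1.lt_of_ne (Ne.symm hy0), hy.2.lt_of_ne hy1⟩
    · rw [hsnx]; exact hFy
  -- continuity of sn on (0, c)
  have hcontA : ∀ x ∈ Set.Ioo (0:ℝ) c, ContinuousAt sn x := by
    intro x hx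
    obtain ⟨hsx, hFsx⟩ := hK x hx
    rw [ContinuousAt, tendsto_order]
    constructor
    · intro a ha
      by_cases ha0 : a < 0
      · filter_upwards [isOpen_Ioo.mem_nhds hx] with z hz
        have := (hK z hz).1.1; linarith
      · push_neg at ha0
        have haI : a ∈ Set.Icc (0:ℝ) 1 := ⟨ha0, by linarith [hsx.2]⟩
        have hFa : F a < x := by
          rw [← hFsx]; exact hFmono haI ⟨hsx.1.le, hsx.2.le⟩ ha
        filter_upwards [isOpen_Ioo.mem_nhds (⟨hFa, hx.2⟩ : x ∈ Set.Ioo (F a) c)] with z hz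
        have hz' : z ∈ Set.Ioo (0:ℝ) c := ⟨lt_of_le_of_lt (hFnn a haI) hz.1, hz.2⟩
        obtain ⟨hsz, hFsz⟩ := hK z hz'
        by_contra h; push_neg at h
        have : F (sn z) ≤ F a := hFmono.monotoneOn ⟨hsz.1.le, hsz.2.le⟩ haI h
        rw [hFsz] at this; linarith [hz.1]
    · intro b hb
      by_cases hb1 : 1 < b
      · filter_upwards [isOpen_Ioo.mem_nhds hx] with z hz
        have := (hK z hz).1.2; linarith
      · push_neg at hb1
        have hbI : b ∈ Set.Icc (0:ℝ) 1 := ⟨by linarith [hsx.1], hb1⟩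
        have hFb : x < F b := by
          rw [← hFsx]; exact hFmono ⟨hsx.1.le, hsx.2.le⟩ hbI hb
        have hFbc : F b ≤ c := by
          rw [← hF1]; exact hFmono.monotoneOn hbI ⟨zero_le_one, le_refl 1⟩ hb1
        filter_upwards [isOpen_Ioo.mem_nhds (⟨hx.1, hFb⟩ : x ∈ Set.Ioo 0 (F b))] with z hz
        have hz' : z ∈ Set.Ioo (0:ℝ) c := ⟨hz.1, lt_of_lt_of_le hz.2 hFbc⟩
        obtain ⟨hsz, hFsz⟩ := hK z hz'
        by_contra h; push_neg at h
        have : F b ≤ F (sn z) := hFmono.monotoneOn hbI ⟨hsz.1.le, hsz.2.le⟩ h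
        rw [hFsz] at this; linarith [hz.2]
  -- tendsto of sn at c from the left
  have hIooc : Set.Ioo (0:ℝ) c ∈ 𝓝[<] c := Ioo_mem_nhdsLT_of_mem ⟨hc0, le_refl c⟩
  have htend1 : Tendsto sn (𝓝[<] c) (𝓝 1) := by
    rw [tendsto_order]
    constructor
    · intro a ha
      by_cases ha0 : a < 0
      · filter_upwards [hIooc] with z hz
        have := (hK z hz).1.1; linarith
      · push_neg at ha0
        have haI : a ∈ Set.Icc (0:ℝ) 1 := ⟨ha0, ha.le⟩
        have hFa : F a < c := by
          rw [← hF1]; exact hFmono haI ⟨zero_le_one, le_refl 1⟩ ha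
        have hmem2 : Set.Ioo (F a) c ∈ 𝓝[<] c := Ioo_mem_nhdsLT_of_mem ⟨hFa, le_refl c⟩
        filter_upwards [hIooc, hmem2] with z hz hz2
        obtain ⟨hsz, hFsz⟩ := hK z hz
        by_contra h; push_neg at h
        have : F (sn z) ≤ F a := hFmono.monotoneOn ⟨hsz.1.le, hsz.2.le⟩ haI h
        rw [hFsz] at this; linarith [hz2.1]
    · intro b hb
      filter_upwards [hIooc] with z hz
      have := (hK z hz).1.2; linarith
  -- first derivative on (0, c)
  have hA : ∀ x ∈ Set.Ioo (0:ℝ) c, HasDerivAt sn ((1 - sn x ^ q) ^ (1/2 : ℝ)) x := by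
    intro x hx
    obtain ⟨hsx, hFsx⟩ := hK x hx
    have hy : sn x ∈ Set.Ico (0:ℝ) 1 := ⟨hsx.1.le, hsx.2⟩
    have hFd : HasDerivAt F (f (sn x)) (sn x) := by
      rw [hFdef]
      exact intervalIntegral.integral_hasDerivAt_right
        (hFsub 0 (sn x) ⟨le_refl 0, zero_le_one⟩ ⟨hsx.1.le, hsx.2.le⟩)
        ⟨Set.univ, Filter.univ_mem, hfm.aestronglyMeasurable.restrict⟩ (hf_cont _ hy)
    have hfg : ∀ᶠ z in 𝓝 x, F (sn z) = z := by
      filter_upwards [isOpen_Ioo.mem_nhds hx] with z hz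
      exact (hK z hz).2
    have h0 : f (sn x) ≠ 0 := (hf_pos _ hy).ne'
    have hder := HasDerivAt.of_local_left_inverse (hcontA x hx) hFd h0 hfg
    have hpos' : 0 < 1 - sn x ^ q := by
      have := Real.rpow_lt_one hsx.1.le hsx.2 hq0
      linarith
    have heq : (f (sn x))⁻¹ = (1 - sn x ^ q) ^ (1/2 : ℝ) := by
      rw [hf_eval, Real.rpow_neg hpos'.le, inv_inv]
    rwa [heq] at hder
  have hpos1 : ∀ x ∈ Set.Ioo (0:ℝ) c, 0 < 1 - sn x ^ q := by
    intro x hx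
    have h := (hK x hx).1
    have := Real.rpow_lt_one h.1.le h.2 hq0
    linarith
  -- second derivative on (0, c)
  have hB : ∀ x ∈ Set.Ioo (0:ℝ) c,
      HasDerivAt (deriv sn) (-(q/2) * (|sn x| ^ (q - 2) * sn x)) x := by
    intro x hx
    have hsx := (hK x hx).1
    have h1 : HasDerivAt sn ((1 - sn x ^ q) ^ (1/2 : ℝ)) x := hA x hx
    have h2 : HasDerivAt (fun z => sn z ^ q)
        ((1 - sn x ^ q) ^ (1/2 : ℝ) * q * sn x ^ (q - 1)) x :=
      h1.rpow_const (Or.inr hq.le)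
    have h3 : HasDerivAt (fun z => 1 - sn z ^ q)
        (-((1 - sn x ^ q) ^ (1/2 : ℝ) * q * sn x ^ (q - 1))) x := h2.const_sub 1
    have h4 : HasDerivAt (fun z => (1 - sn z ^ q) ^ (1/2 : ℝ))
        (-((1 - sn x ^ q) ^ (1/2 : ℝ) * q * sn x ^ (q - 1)) * (1/2 : ℝ)
          * (1 - sn x ^ q) ^ ((1/2 : ℝ) - 1)) x :=
      h3.rpow_const (Or.inl (hpos1 x hx).ne')
    have heq : deriv sn =ᶠ[𝓝 x] fun z => (1 - sn z ^ q) ^ (1/2 : ℝ) := by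
      filter_upwards [isOpen_Ioo.mem_nhds hx] with z hz
      exact (hA z hz).deriv
    have h5 := h4.congr_of_eventuallyEq heq
    have hval : -((1 - sn x ^ q) ^ (1/2 : ℝ) * q * sn x ^ (q - 1)) * (1/2 : ℝ)
          * (1 - sn x ^ q) ^ ((1/2 : ℝ) - 1)
        = -(q/2) * (|sn x| ^ (q - 2) * sn x) := by
      have e2 : |sn x| ^ (q - 2) * sn x = sn x ^ (q - 1) := by
        rw [abs_of_pos hsx.1, show q - 1 = q - 2 + 1 by ring, Real.rpow_add_one hsx.1.ne']
      rw [e2]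
      have e1' : (1 - sn x ^ q) ^ (1/2 : ℝ) * (1 - sn x ^ q) ^ ((1/2 : ℝ) - 1) = 1 := by
        rw [← Real.rpow_add (hpos1 x hx), show (1/2 : ℝ) + ((1/2 : ℝ) - 1) = 0 by ring,
          Real.rpow_zero]
      linear_combination (-(q * sn x ^ (q - 1)) / 2) * e1'
    exact hval ▸ h5
  -- reflection machinery
  have hrefl : ∀ z v, HasDerivAt sn v (π₀ - z) → HasDerivAt sn (-v) z := by
    intro z v h
    have hr : HasDerivAt (fun w : ℝ => π₀ - w) (-1 : ℝ) z := by
      simpa using (hasDerivAt_id z).const_sub π₀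
    have h2 : HasDerivAt (sn ∘ fun w : ℝ => π₀ - w) (v * -1) z := HasDerivAt.comp z h hr
    have hfun : (sn ∘ fun w : ℝ => π₀ - w) = sn := funext fun w => hsym w
    rw [hfun] at h2
    simpa using h2
  have hIooR : ∀ z ∈ Set.Ioo c π₀, π₀ - z ∈ Set.Ioo (0:ℝ) c := by
    intro z hz
    constructor
    · linarith [hz.2]
    · rw [hcdef] at hz ⊢; linarith [hz.1]
  have hgrefl : ∀ z ∈ Set.Ioo c π₀, deriv sn z = -((1 - sn z ^ q) ^ (1/2 : ℝ)) := by
    intro z hz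
    have hz' := hIooR z hz
    have h := hrefl z _ (hA _ hz')
    rw [hsym z] at h
    exact h.deriv
  -- second derivative on (c, π₀)
  have hB' : ∀ x ∈ Set.Ioo c π₀,
      HasDerivAt (deriv sn) (-(q/2) * (|sn x| ^ (q - 2) * sn x)) x := by
    intro x hx
    have hx' := hIooR x hx
    have hBx := hB _ hx'
    have hr : HasDerivAt (fun w : ℝ => π₀ - w) (-1 : ℝ) x := by
      simpa using (hasDerivAt_id x).const_sub π₀
    have h2 : HasDerivAt (fun z => -(deriv sn (π₀ - z)))
        (-(-(q/2) * (|sn (π₀ - x)| ^ (q - 2) * sn (π₀ - x)) * -1)) x :=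
      (HasDerivAt.comp x hBx hr).neg
    have heq : deriv sn =ᶠ[𝓝 x] fun z => -(deriv sn (π₀ - z)) := by
      filter_upwards [isOpen_Ioo.mem_nhds hx] with z hz
      have h3 := hgrefl z hz
      have hz' := hIooR z hz
      have h4 := (hA _ hz').deriv
      rw [h3, h4, hsym z]
    have h5 := h2.congr_of_eventuallyEq heq
    have hval : -(-(q/2) * (|sn (π₀ - x)| ^ (q - 2) * sn (π₀ - x)) * -1)
        = -(q/2) * (|sn x| ^ (q - 2) * sn x) := by
      rw [hsym x]; ring
    exact hval ▸ h5
  -- behaviour at c : first derivative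
  have houter0 : Tendsto (fun w : ℝ => (1 - w ^ q) ^ (1/2 : ℝ)) (𝓝 1) (𝓝 0) := by
    have h1 : ContinuousAt (fun w : ℝ => 1 - w ^ q) 1 :=
      continuousAt_const.sub (continuousAt_id.rpow_const (Or.inr hq0.le))
    have h3 : ContinuousAt (fun w : ℝ => (1 - w ^ q) ^ (1/2 : ℝ)) 1 :=
      h1.rpow_const (Or.inr (by norm_num))
    have h4 := h3.tendsto
    have h5 : ((1:ℝ) - 1 ^ q) ^ (1/2 : ℝ) = 0 := by
      simp [Real.one_rpow, Real.zero_rpow (by norm_num : (1/2 : ℝ) ≠ 0)]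
    rwa [h5] at h4
  have htendG : Tendsto (deriv sn) (𝓝[<] c) (𝓝 0) := by
    have h1 : Tendsto (fun z => (1 - sn z ^ q) ^ (1/2 : ℝ)) (𝓝[<] c) (𝓝 0) :=
      houter0.comp htend1
    apply Tendsto.congr' _ h1
    filter_upwards [hIooc] with z hz
    exact ((hA z hz).deriv).symm
  have hdiffL : DifferentiableOn ℝ sn (Set.Ioo 0 c) := fun z hz =>
    ((hA z hz).differentiableAt).differentiableWithinAt
  have hcontW : ContinuousWithinAt sn (Set.Ioo 0 c) c := by
    rw [ContinuousWithinAt, hsnc]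
    exact htend1.mono_left (nhdsWithin_mono c Set.Ioo_subset_Iio_self)
  have hL : HasDerivWithinAt sn 0 (Set.Iic c) c :=
    hasDerivWithinAt_Iic_of_tendsto_deriv hdiffL hcontW hIooc htendG
  have hmaps : Set.MapsTo (fun w : ℝ => π₀ - w) (Set.Ici c) (Set.Iic c) := by
    intro w hw
    simp only [Set.mem_Ici] at hw
    simp only [Set.mem_Iic]
    rw [hcdef] at hw ⊢; linarith
  have hrW : HasDerivWithinAt (fun w : ℝ => π₀ - w) (-1 : ℝ) (Set.Ici c) c := by
    have : HasDerivAt (fun w : ℝ => π₀ - w) (-1 : ℝ) c := by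
      simpa using (hasDerivAt_id c).const_sub π₀
    exact this.hasDerivWithinAt
  have hRrefl : ∀ v : ℝ, HasDerivWithinAt sn v (Set.Iic c) c →
      HasDerivWithinAt sn (-v) (Set.Ici c) c := by
    intro v h
    have h' : HasDerivWithinAt sn v (Set.Iic c) ((fun w : ℝ => π₀ - w) c) := by
      simp only []
      rw [hπc]
      exact h
    have h2 : HasDerivWithinAt (sn ∘ fun w : ℝ => π₀ - w) (v * -1) (Set.Ici c) c :=
      HasDerivWithinAt.comp c h' hrW hmaps
    have hfun : (sn ∘ fun w : ℝ => π₀ - w) = sn := funext fun w => hsym w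
    rw [hfun] at h2
    simpa using h2
  have hsnc' : HasDerivAt sn 0 c := by
    have hR := hRrefl 0 hL
    rw [neg_zero] at hR
    have := hL.union hR
    rw [Set.Iic_union_Ici] at this
    exact hasDerivWithinAt_univ.mp this
  have hg_c : deriv sn c = 0 := hsnc'.deriv
  -- behaviour at c : second derivative
  have hdiffgL : DifferentiableOn ℝ (deriv sn) (Set.Ioo 0 c) := fun z hz =>
    ((hB z hz).differentiableAt).differentiableWithinAt
  have hcontgW : ContinuousWithinAt (deriv sn) (Set.Ioo 0 c) c := by
    rw [ContinuousWithinAt, hg_c]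
    exact htendG.mono_left (nhdsWithin_mono c Set.Ioo_subset_Iio_self)
  have hDcont : Tendsto (fun y : ℝ => -(q/2) * (|y| ^ (q - 2) * y)) (𝓝 1) (𝓝 (-(q/2))) := by
    have habs : ContinuousAt (fun y : ℝ => |y| ^ (q - 2)) 1 :=
      continuous_abs.continuousAt.rpow_const (Or.inl (by norm_num))
    have h1 : ContinuousAt (fun y : ℝ => -(q/2) * (|y| ^ (q - 2) * y)) 1 :=
      continuousAt_const.mul (habs.mul continuousAt_id)
    have h2 := h1.tendsto
    have h3 : -(q/2) * (|(1:ℝ)| ^ (q - 2) * 1) = -(q/2) := by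
      simp [abs_one, Real.one_rpow]
    rwa [h3] at h2
  have htendD : Tendsto (deriv (deriv sn)) (𝓝[<] c) (𝓝 (-(q/2))) := by
    have h1 : Tendsto (fun z => -(q/2) * (|sn z| ^ (q - 2) * sn z)) (𝓝[<] c) (𝓝 (-(q/2))) :=
      hDcont.comp htend1
    apply Tendsto.congr' _ h1
    filter_upwards [hIooc] with z hz
    exact ((hB z hz).deriv).symm
  have hgL : HasDerivWithinAt (deriv sn) (-(q/2)) (Set.Iic c) c :=
    hasDerivWithinAt_Iic_of_tendsto_deriv hdiffgL hcontgW hIooc htendD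
  have hgR : HasDerivWithinAt (deriv sn) (-(q/2)) (Set.Ici c) c := by
    have hgL' : HasDerivWithinAt (deriv sn) (-(q/2)) (Set.Iic c) ((fun w : ℝ => π₀ - w) c) := by
      simp only []
      rw [hπc]
      exact hgL
    have h2 : HasDerivWithinAt ((deriv sn) ∘ fun w : ℝ => π₀ - w) (-(q/2) * -1)
        (Set.Ici c) c := HasDerivWithinAt.comp c hgL' hrW hmaps
    have h3 := h2.neg
    have heq : deriv sn =ᶠ[𝓝[Set.Ici c] c] fun z => -(((deriv sn) ∘ fun w : ℝ => π₀ - w) z) := by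
      filter_upwards [Ico_mem_nhdsGE_of_mem (⟨le_refl c, hcπ⟩ : c ∈ Set.Ico c π₀)] with z hz
      simp only [Function.comp]
      rcases eq_or_lt_of_le hz.1 with h | h
      · rw [← h, hπc, hg_c, neg_zero]
      · have h4 := hgrefl z ⟨h, hz.2⟩
        have hz' := hIooR z ⟨h, hz.2⟩
        have h5 := (hA _ hz').deriv
        rw [h4, h5, hsym z]
    have hptc : deriv sn c = -(((deriv sn) ∘ fun w : ℝ => π₀ - w) c) := by
      simp only [Function.comp]
      rw [hπc, hg_c, neg_zero]
    have h6 := h3.congr_of_eventuallyEq heq hptc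
    have : -(-(q/2) * (-1:ℝ)) = -(q/2) := by ring
    rwa [this] at h6
  have hgc : HasDerivAt (deriv sn) (-(q/2)) c := by
    have := hgL.union hgR
    rw [Set.Iic_union_Ici] at this
    exact hasDerivWithinAt_univ.mp this
  -- conclusion
  intro x hx
  rcases lt_trichotomy x c with h | h | h
  · exact (hB x ⟨hx.1, h⟩).deriv
  · rw [h, hgc.deriv, hsnc]
    simp [abs_one, Real.one_rpow]
  · exact (hB' x ⟨h, hx.2⟩).deriv
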